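/- For λ ∈ ℝ, the function f(t) = sinc(2Wt) + (λ/2)·sinc(2Wt − 1/2) + (λ/2)·sinc(2Wt + 1/2) has L² energy ∫ f(t)² dt = (1/(2W))·(λ²/2 + 4λ/π + 1), so the normalized pulse g = f·√(2W/(λ²/2 + 4λ/π + 1)) has unit energy. -/

import Mathlib

open Real hiding sinc sinc_zero abs_sinc_le_one
open MeasureTheory FourierTransform Filter Set intervalIntegral
open scoped Convolution

/-- The sinc function, sinc(t) = sin(πt)/(πt) with sinc(0) = 1. -/
noncomputable def sinc (t : ℝ) : ℝ := if t = 0 then 1 else Real.sin (π * t) / (π * t)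

noncomputable def boxFn (c : ℝ) : ℝ → ℂ :=
  Set.indicator (Set.Icc (-(1/2) : ℝ) (1/2))
    (fun t => Complex.exp ((2 * π * c * t : ℝ) * Complex.I))



lemma sinc_even (t : ℝ) : sinc (-t) = sinc t := by
  unfold sinc
  rcases eq_or_ne t 0 with h | h
  · simp [h]
  · rw [if_neg (neg_ne_zero.mpr h), if_neg h]
    rw [mul_neg, Real.sin_neg, neg_div_neg_eq]

lemma sinc_zero : sinc 0 = 1 := by simp [sinc]

lemma sinc_one : sinc 1 = 0 := by simp [sinc]

lemma sinc_half : sinc (1/2) = 2 / π := by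
  have hπ : π ≠ 0 := Real.pi_ne_zero
  rw [sinc, if_neg (by norm_num)]
  rw [show π * (1/2) = π/2 by ring, Real.sin_pi_div_two]
  field_simp

lemma abs_sin_le_abs (t : ℝ) : |Real.sin t| ≤ |t| := by
  have key : ∀ s : ℝ, 0 ≤ s → |Real.sin s| ≤ |s| := by
    intro s hs
    rw [_root_.abs_of_nonneg hs, abs_le]
    refine ⟨?_, Real.sin_le hs⟩
    rcases le_total s π with h | h
    · linarith [Real.sin_nonneg_of_nonneg_of_le_pi hs h]
    · linarith [Real.neg_one_le_sin s, Real.pi_gt_three]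
  rcases le_total 0 t with h | h
  · exact key t h
  · have := key (-t) (by linarith)
    simpa [Real.sin_neg] using this

lemma abs_sinc_le_one (y : ℝ) : |sinc y| ≤ 1 := by
  rcases eq_or_ne y 0 with h | h
  · simp [h, sinc_zero]
  · rw [sinc, if_neg h, abs_div]
    have h1 : |π * y| ≠ 0 := by
      simp [Real.pi_ne_zero, h]
    rw [div_le_one (lt_of_le_of_ne (abs_nonneg _) (Ne.symm h1))]
    exact abs_sin_le_abs _

lemma abs_sinc_le (y : ℝ) (hy : y ≠ 0) : |sinc y| ≤ 1 / (π * |y|) := by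
  have hπ : (0:ℝ) < π := Real.pi_pos
  rw [sinc, if_neg hy, abs_div, abs_mul, _root_.abs_of_pos hπ]
  gcongr
  exact Real.abs_sin_le_one _


lemma integral_cexp_box (θ : ℝ) :
    (∫ t in (-(1/2) : ℝ)..(1/2), Complex.exp ((2 * π * θ * t : ℝ) * Complex.I))
      = (sinc θ : ℂ) := by
  rcases eq_or_ne θ 0 with h | h
  · simp [h, sinc]; norm_num
  · have hπ : (π : ℝ) ≠ 0 := Real.pi_ne_zero
    have hπc : ((π : ℝ) : ℂ) ≠ 0 := Complex.ofReal_ne_zero.mpr hπ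
    have hθc : ((θ : ℝ) : ℂ) ≠ 0 := Complex.ofReal_ne_zero.mpr h
    have hc : (2 * (π:ℂ) * (θ:ℂ) * Complex.I) ≠ 0 := by
      apply mul_ne_zero _ Complex.I_ne_zero
      exact mul_ne_zero (mul_ne_zero two_ne_zero hπc) hθc
    have heq : (fun t : ℝ => Complex.exp ((2 * π * θ * t : ℝ) * Complex.I))
        = fun t : ℝ => Complex.exp ((2 * (π:ℂ) * (θ:ℂ) * Complex.I) * (t : ℂ)) :=
      funext fun t => by push_cast; ring_nf
    rw [heq, integral_exp_mul_complex hc]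
    have e1 : (2 * (π:ℂ) * (θ:ℂ) * Complex.I) * ((1/2 : ℝ) : ℂ)
        = ((π * θ : ℝ) : ℂ) * Complex.I := by push_cast; ring
    have e2 : (2 * (π:ℂ) * (θ:ℂ) * Complex.I) * ((-(1/2) : ℝ) : ℂ)
        = (-((π * θ : ℝ) : ℂ)) * Complex.I := by push_cast; ring
    rw [e1, e2, Complex.exp_mul_I, Complex.exp_mul_I, Complex.cos_neg, Complex.sin_neg]
    rw [sinc, if_neg h, div_eq_iff hc]
    push_cast
    field_simp
    ring


lemma boxFn_continuousOn (c : ℝ) :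
    Continuous (fun t : ℝ => Complex.exp ((2 * π * c * t : ℝ) * Complex.I)) := by
  fun_prop

lemma boxFn_aestronglyMeasurable (c : ℝ) : AEStronglyMeasurable (boxFn c) volume :=
  ((boxFn_continuousOn c).stronglyMeasurable.indicator measurableSet_Icc).aestronglyMeasurable

lemma boxFn_norm_le (c t : ℝ) : ‖boxFn c t‖ ≤ 1 := by
  unfold boxFn
  by_cases h : t ∈ Set.Icc (-(1/2) : ℝ) (1/2)
  · rw [Set.indicator_of_mem h]
    rw [Complex.norm_exp_ofReal_mul_I]
  · rw [Set.indicator_of_notMem h]; simp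

lemma boxFn_integrable (c : ℝ) : Integrable (boxFn c) volume := by
  rw [boxFn, integrable_indicator_iff measurableSet_Icc]
  exact (boxFn_continuousOn c).integrableOn_Icc

/-- key computation: weighted integral of boxFn -/
lemma integral_exp_mul_boxFn (c x : ℝ) :
    (∫ t : ℝ, Complex.exp ((-2 * π * t * x : ℝ) * Complex.I) * boxFn c t)
      = (sinc (x - c) : ℂ) := by
  have : (fun t : ℝ => Complex.exp ((-2 * π * t * x : ℝ) * Complex.I) * boxFn c t)
      = Set.indicator (Set.Icc (-(1/2) : ℝ) (1/2))
        (fun t => Complex.exp ((2 * π * (c - x) * t : ℝ) * Complex.I)) := by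
    funext t
    by_cases h : t ∈ Set.Icc (-(1/2) : ℝ) (1/2)
    · rw [boxFn, Set.indicator_of_mem h, Set.indicator_of_mem h, ← Complex.exp_add]
      congr 1
      push_cast; ring
    · rw [boxFn, Set.indicator_of_notMem h, Set.indicator_of_notMem h, mul_zero]
  rw [this, MeasureTheory.integral_indicator measurableSet_Icc,
    MeasureTheory.integral_Icc_eq_integral_Ioc,
    ← intervalIntegral.integral_of_le (by norm_num : (-(1/2):ℝ) ≤ 1/2),
    integral_cexp_box, show c - x = -(x - c) by ring, sinc_even]

lemma fourier_boxFn (c x : ℝ) : 𝓕 (boxFn c) x = (sinc (x - c) : ℂ) := by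
  rw [Real.fourier_real_eq_integral_exp_smul]
  simp_rw [smul_eq_mul]
  rw [← integral_exp_mul_boxFn c x]


lemma conv_integrand_integrable (a b : ℝ) :
    Integrable (fun p : ℝ × ℝ => boxFn a p.2 * boxFn b (p.1 - p.2))
      (volume.prod volume) := by
  have := (boxFn_integrable a).convolution_integrand (ContinuousLinearMap.mul ℝ ℂ)
    (boxFn_integrable b)
  simpa using this

lemma fourier_conv (a b x : ℝ) :
    𝓕 (fun y => ∫ t, boxFn a t * boxFn b (y - t)) x
      = (sinc (x - a) : ℂ) * (sinc (x - b) : ℂ) := by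
  set e : ℝ → ℂ := fun v => Complex.exp ((-2 * π * v * x : ℝ) * Complex.I) with he
  have he_cont : Continuous e := by fun_prop
  have he_norm : ∀ v, ‖e v‖ = 1 := fun v => by
    simp only [he]; exact Complex.norm_exp_ofReal_mul_I _
  have hprod := conv_integrand_integrable a b
  have hF : Integrable (fun p : ℝ × ℝ => e p.1 * (boxFn a p.2 * boxFn b (p.1 - p.2)))
      (volume.prod volume) := by
    refine hprod.norm.mono' ?_ ?_
    · exact ((he_cont.comp continuous_fst).aestronglyMeasurable).mul hprod.aestronglyMeasurable
    · filter_upwards with p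
      rw [norm_mul, he_norm, one_mul]
  have he_add : ∀ v t : ℝ, e (v + t) = e v * e t := by
    intro v t
    simp only [he, ← Complex.exp_add]
    congr 1
    push_cast; ring
  calc 𝓕 (fun y => ∫ t, boxFn a t * boxFn b (y - t)) x
      = ∫ v, e v * ∫ t, boxFn a t * boxFn b (v - t) := by
        rw [Real.fourier_real_eq_integral_exp_smul]
        simp_rw [smul_eq_mul]
        rfl
    _ = ∫ v, ∫ t, e v * (boxFn a t * boxFn b (v - t)) := by
        simp_rw [MeasureTheory.integral_const_mul]
    _ = ∫ t, ∫ v, e v * (boxFn a t * boxFn b (v - t)) := integral_integral_swap hF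
    _ = ∫ t, ∫ v, e (v + t) * (boxFn a t * boxFn b v) := by
        congr 1
        funext t
        rw [← integral_add_right_eq_self (fun v => e v * (boxFn a t * boxFn b (v - t))) t]
        simp
    _ = ∫ t, (e t * boxFn a t) * ∫ v, e v * boxFn b v := by
        congr 1
        funext t
        rw [← MeasureTheory.integral_const_mul]
        congr 1
        funext v
        rw [he_add]
        ring
    _ = (∫ t, e t * boxFn a t) * (sinc (x - b) : ℂ) := by
        rw [integral_exp_mul_boxFn b x, ← MeasureTheory.integral_mul_const]
    _ = (sinc (x - a) : ℂ) * (sinc (x - b) : ℂ) := by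
        rw [integral_exp_mul_boxFn a x]


lemma boxFn_stronglyMeasurable (c : ℝ) : StronglyMeasurable (boxFn c) :=
  (boxFn_continuousOn c).stronglyMeasurable.indicator measurableSet_Icc

lemma sinc_measurable : Measurable sinc := by
  unfold sinc
  refine Measurable.ite ?_ measurable_const (by fun_prop)
  exact measurableSet_eq

lemma sinc_mul_sinc_integrable {a b : ℝ} (ha : |a| ≤ 1/2) (hb : |b| ≤ 1/2) :
    Integrable (fun x : ℝ => sinc (x - a) * sinc (x - b)) := by
  have hπ := Real.pi_gt_three
  refine (integrable_inv_one_add_sq.const_mul 9).mono' ?_ ?_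
  · exact ((sinc_measurable.comp (measurable_id.sub measurable_const)).mul
      (sinc_measurable.comp (measurable_id.sub measurable_const))).aestronglyMeasurable
  · filter_upwards with x
    rw [Real.norm_eq_abs, abs_mul]
    have hC : (0:ℝ) < 1 + x^2 := by positivity
    rcases le_or_gt |x| 2 with hx | hx
    · have h1 := abs_sinc_le_one (x - a)
      have h2 := abs_sinc_le_one (x - b)
      have hx2 : x^2 ≤ 4 := by nlinarith [sq_abs x, abs_nonneg x]
      have h9 : (1:ℝ) ≤ 9 * (1 + x^2)⁻¹ := by
        rw [le_mul_inv_iff₀ hC, one_mul]; linarith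
      calc |sinc (x-a)| * |sinc (x-b)| ≤ 1 * 1 :=
            mul_le_mul h1 h2 (abs_nonneg _) zero_le_one
        _ ≤ 9 * (1 + x^2)⁻¹ := by linarith
    · have ha' : |x| - 1/2 ≤ |x - a| := by
        have := abs_sub_abs_le_abs_sub x a; linarith
      have hb' : |x| - 1/2 ≤ |x - b| := by
        have := abs_sub_abs_le_abs_sub x b; linarith
      have hA : (0:ℝ) < |x - a| := by linarith
      have hB : (0:ℝ) < |x - b| := by linarith
      have hxa : x - a ≠ 0 := fun h => by rw [h] at hA; simp at hA
      have hxb : x - b ≠ 0 := fun h => by rw [h] at hB; simp at hB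
      have hπA : (0:ℝ) < π * |x - a| := by positivity
      have hπB : (0:ℝ) < π * |x - b| := by positivity
      calc |sinc (x-a)| * |sinc (x-b)|
          ≤ (1 / (π * |x - a|)) * (1 / (π * |x - b|)) :=
            mul_le_mul (abs_sinc_le _ hxa) (abs_sinc_le _ hxb) (abs_nonneg _) (by positivity)
        _ ≤ 9 * (1 + x^2)⁻¹ := by
            rw [div_mul_div_comm, one_mul,
              show (9:ℝ) * (1 + x^2)⁻¹ = 9 / (1 + x^2) from (div_eq_mul_inv 9 _).symm,
              div_le_div_iff₀ (by positivity) hC]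
            have e1 : 3 * (|x| - 1/2) ≤ π * |x - a| := by nlinarith
            have e2 : 3 * (|x| - 1/2) ≤ π * |x - b| := by nlinarith
            have e3 : (3 * (|x| - 1/2)) * (3 * (|x| - 1/2)) ≤ (π * |x - a|) * (π * |x - b|) :=
              mul_le_mul e1 e2 (by linarith) (by positivity)
            nlinarith [sq_abs x]

lemma boxFn_continuousAt (c : ℝ) {y : ℝ} (h1 : y ≠ -(1/2)) (h2 : y ≠ (1/2)) :
    ContinuousAt (boxFn c) y := by
  by_cases hy : y ∈ Set.Icc (-(1/2) : ℝ) (1/2)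
  · have hy' : y ∈ Set.Ioo (-(1/2) : ℝ) (1/2) :=
      ⟨lt_of_le_of_ne hy.1 (Ne.symm h1), lt_of_le_of_ne hy.2 h2⟩
    have hev : boxFn c =ᶠ[nhds y] (fun t => Complex.exp ((2 * π * c * t : ℝ) * Complex.I)) := by
      filter_upwards [isOpen_Ioo.mem_nhds hy'] with t ht
      exact Set.indicator_of_mem (Set.Ioo_subset_Icc_self ht) _
    exact ((boxFn_continuousOn c).continuousAt).congr hev.symm
  · have hev : boxFn c =ᶠ[nhds y] (fun _ => (0:ℂ)) := by
      filter_upwards [(isClosed_Icc.isOpen_compl).mem_nhds hy] with t ht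
      exact Set.indicator_of_notMem ht _
    exact continuousAt_const.congr hev.symm

lemma conv_continuousAt (a b : ℝ) :
    ContinuousAt (fun y : ℝ => ∫ t, boxFn a t * boxFn b (y - t)) 0 := by
  apply continuousAt_of_dominated (bound := fun t => ‖boxFn a t‖)
  · filter_upwards with x
    exact ((boxFn_stronglyMeasurable a).aestronglyMeasurable).mul
      (((boxFn_stronglyMeasurable b).comp_measurable
        (measurable_const.sub measurable_id)).aestronglyMeasurable)
  · filter_upwards with x
    filter_upwards with t
    rw [norm_mul]
    calc ‖boxFn a t‖ * ‖boxFn b (x - t)‖ ≤ ‖boxFn a t‖ * 1 :=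
          mul_le_mul_of_nonneg_left (boxFn_norm_le _ _) (norm_nonneg _)
      _ = ‖boxFn a t‖ := mul_one _
  · exact (boxFn_integrable a).norm
  · have hcnt : (({-(1/2), (1/2)} : Set ℝ)).Countable :=
      (Set.countable_singleton _).insert _
    filter_upwards [hcnt.ae_notMem volume] with t ht
    simp only [Set.mem_insert_iff, Set.mem_singleton_iff, not_or] at ht
    apply ContinuousAt.mul continuousAt_const
    have hsub : ContinuousAt (fun x : ℝ => x - t) 0 :=
      (continuousAt_id.sub continuousAt_const)
    have hb : ContinuousAt (boxFn b) ((fun x : ℝ => x - t) 0) := by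
      simp only [zero_sub]
      exact boxFn_continuousAt b (fun h => ht.2 (by linarith [neg_eq_iff_eq_neg.mp h]))
        (fun h => ht.1 (by linarith [neg_eq_iff_eq_neg.mp h]))
    exact ContinuousAt.comp (f := fun x : ℝ => x - t) hb hsub

lemma conv_at_zero (a b : ℝ) :
    (∫ t, boxFn a t * boxFn b ((0:ℝ) - t)) = (sinc (a - b) : ℂ) := by
  have : (fun t => boxFn a t * boxFn b ((0:ℝ) - t))
      = fun t => Complex.exp ((-2 * π * t * b : ℝ) * Complex.I) * boxFn a t := by
    funext t
    by_cases h : t ∈ Set.Icc (-(1/2) : ℝ) (1/2)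
    · have h' : (0:ℝ) - t ∈ Set.Icc (-(1/2) : ℝ) (1/2) := by
        simp only [Set.mem_Icc] at h ⊢; constructor <;> linarith
      rw [boxFn, boxFn, Set.indicator_of_mem h, Set.indicator_of_mem h',
        ← Complex.exp_add, ← Complex.exp_add]
      congr 1
      push_cast; ring
    · have h' : (0:ℝ) - t ∉ Set.Icc (-(1/2) : ℝ) (1/2) := by
        simp only [Set.mem_Icc] at h ⊢
        intro hc; exact h ⟨by linarith [hc.2], by linarith [hc.1]⟩
      rw [boxFn, boxFn, Set.indicator_of_notMem h, Set.indicator_of_notMem h']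
      simp
  rw [this, integral_exp_mul_boxFn a b, show b - a = -(a - b) by ring, sinc_even]

lemma integral_sinc_mul_sinc {a b : ℝ} (ha : |a| ≤ 1/2) (hb : |b| ≤ 1/2) :
    ∫ x : ℝ, sinc (x - a) * sinc (x - b) = sinc (a - b) := by
  set h : ℝ → ℂ := fun y => ∫ t, boxFn a t * boxFn b (y - t) with hdef
  have hint : Integrable h := by
    have hc := (boxFn_integrable a).integrable_convolution (ContinuousLinearMap.mul ℝ ℂ)
      (boxFn_integrable b)
    have : (boxFn a ⋆[ContinuousLinearMap.mul ℝ ℂ] boxFn b) = h := by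
      funext y
      rw [convolution_def]
      rfl
    rwa [this] at hc
  have hft : 𝓕 h = fun x => ((sinc (x - a) * sinc (x - b) : ℝ) : ℂ) := by
    funext x
    rw [hdef, fourier_conv a b x, Complex.ofReal_mul]
  have hftint : Integrable (𝓕 h) := by
    rw [hft]
    exact (sinc_mul_sinc_integrable ha hb).ofReal
  have hinv := hint.fourierInv_fourier_eq hftint (conv_continuousAt a b)
  have hlhs : 𝓕⁻ (𝓕 h) 0 = ∫ x, 𝓕 h x := by
    rw [Real.fourierInv_eq]
    simp
  rw [hlhs, hft] at hinv
  have hrhs : h 0 = (sinc (a - b) : ℂ) := conv_at_zero a b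
  rw [hrhs] at hinv
  have hcast : (∫ x : ℝ, ((sinc (x - a) * sinc (x - b) : ℝ) : ℂ))
      = ((∫ x : ℝ, sinc (x - a) * sinc (x - b) : ℝ) : ℂ) :=
    _root_.integral_ofReal (𝕜 := ℂ) (f := fun x : ℝ => sinc (x - a) * sinc (x - b))
  simp only at hinv
  rw [hcast] at hinv
  exact_mod_cast hinv


lemma integral_pulse_sq (lam : ℝ) :
    (∫ u : ℝ, (sinc u + (lam/2) * sinc (u - 1/2) + (lam/2) * sinc (u + 1/2))^2)
      = lam^2/2 + 4*lam/π + 1 := by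
  have hπ : (0:ℝ) < π := Real.pi_pos
  set c := lam/2 with hc
  have hhalf : |(1/2 : ℝ)| ≤ 1/2 := by
    rw [abs_of_nonneg (by norm_num : (0:ℝ) ≤ 1/2)]
  have hneg : |(-(1/2) : ℝ)| ≤ 1/2 := by rw [abs_neg]; exact hhalf
  have hzero : |(0 : ℝ)| ≤ 1/2 := by simp
  have i00 := sinc_mul_sinc_integrable hzero hzero
  have i11 := sinc_mul_sinc_integrable hhalf hhalf
  have i22 := sinc_mul_sinc_integrable hneg hneg
  have i01 := sinc_mul_sinc_integrable hzero hhalf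
  have i02 := sinc_mul_sinc_integrable hzero hneg
  have i12 := sinc_mul_sinc_integrable hhalf hneg
  have hG : (fun u : ℝ => (sinc u + c * sinc (u - 1/2) + c * sinc (u + 1/2))^2)
      = fun u => (sinc (u-(0:ℝ)) * sinc (u-(0:ℝ)))
        + (((c*c) * (sinc (u-(1/2:ℝ)) * sinc (u-(1/2:ℝ))))
        + (((c*c) * (sinc (u-(-(1/2):ℝ)) * sinc (u-(-(1/2):ℝ))))
        + (((2*c) * (sinc (u-(0:ℝ)) * sinc (u-(1/2:ℝ))))
        + (((2*c) * (sinc (u-(0:ℝ)) * sinc (u-(-(1/2):ℝ))))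
        + ((2*(c*c)) * (sinc (u-(1/2:ℝ)) * sinc (u-(-(1/2):ℝ)))))))) := by
    funext u
    simp only [sub_zero, sub_neg_eq_add]
    ring
  have T2 : Integrable (fun u : ℝ => (c*c) * (sinc (u-(1/2:ℝ)) * sinc (u-(1/2:ℝ)))) volume :=
    i11.const_mul _
  have T3 : Integrable (fun u : ℝ => (c*c) * (sinc (u-(-(1/2):ℝ)) * sinc (u-(-(1/2):ℝ)))) volume :=
    i22.const_mul _
  have T4 : Integrable (fun u : ℝ => (2*c) * (sinc (u-(0:ℝ)) * sinc (u-(1/2:ℝ)))) volume :=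
    i01.const_mul _
  have T5 : Integrable (fun u : ℝ => (2*c) * (sinc (u-(0:ℝ)) * sinc (u-(-(1/2):ℝ)))) volume :=
    i02.const_mul _
  have T6 : Integrable (fun u : ℝ => (2*(c*c)) * (sinc (u-(1/2:ℝ)) * sinc (u-(-(1/2):ℝ)))) volume :=
    i12.const_mul _
  have S5 : Integrable (fun u : ℝ => (2*c) * (sinc (u-(0:ℝ)) * sinc (u-(-(1/2):ℝ)))
      + (2*(c*c)) * (sinc (u-(1/2:ℝ)) * sinc (u-(-(1/2):ℝ)))) volume := T5.add T6
  have S4 : Integrable (fun u : ℝ => (2*c) * (sinc (u-(0:ℝ)) * sinc (u-(1/2:ℝ)))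
      + ((2*c) * (sinc (u-(0:ℝ)) * sinc (u-(-(1/2):ℝ)))
      + (2*(c*c)) * (sinc (u-(1/2:ℝ)) * sinc (u-(-(1/2):ℝ))))) volume := T4.add S5
  have S3 : Integrable (fun u : ℝ => (c*c) * (sinc (u-(-(1/2):ℝ)) * sinc (u-(-(1/2):ℝ)))
      + ((2*c) * (sinc (u-(0:ℝ)) * sinc (u-(1/2:ℝ)))
      + ((2*c) * (sinc (u-(0:ℝ)) * sinc (u-(-(1/2):ℝ)))
      + (2*(c*c)) * (sinc (u-(1/2:ℝ)) * sinc (u-(-(1/2):ℝ)))))) volume := T3.add S4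
  have S2 : Integrable (fun u : ℝ => (c*c) * (sinc (u-(1/2:ℝ)) * sinc (u-(1/2:ℝ)))
      + ((c*c) * (sinc (u-(-(1/2):ℝ)) * sinc (u-(-(1/2):ℝ)))
      + ((2*c) * (sinc (u-(0:ℝ)) * sinc (u-(1/2:ℝ)))
      + ((2*c) * (sinc (u-(0:ℝ)) * sinc (u-(-(1/2):ℝ)))
      + (2*(c*c)) * (sinc (u-(1/2:ℝ)) * sinc (u-(-(1/2):ℝ))))))) volume := T2.add S3
  rw [hG, integral_add i00 S2, integral_add T2 S3, integral_add T3 S4,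
    integral_add T4 S5, integral_add T5 T6]
  rw [MeasureTheory.integral_const_mul, MeasureTheory.integral_const_mul, MeasureTheory.integral_const_mul, MeasureTheory.integral_const_mul,
    MeasureTheory.integral_const_mul]
  rw [integral_sinc_mul_sinc hzero hzero, integral_sinc_mul_sinc hhalf hhalf,
    integral_sinc_mul_sinc hneg hneg, integral_sinc_mul_sinc hzero hhalf,
    integral_sinc_mul_sinc hzero hneg, integral_sinc_mul_sinc hhalf hneg]
  rw [show (0:ℝ) - 0 = 0 by ring, show (1/2:ℝ) - 1/2 = 0 by ring,
    show (-(1/2):ℝ) - -(1/2) = 0 by ring, show (0:ℝ) - 1/2 = -(1/2) by ring,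
    show (0:ℝ) - -(1/2) = (1/2:ℝ) by ring, show (1/2:ℝ) - -(1/2) = 1 by ring]
  rw [sinc_zero, sinc_even, sinc_half, sinc_one, hc]
  field_simp
  ring

/-- The pulse f(t) = sinc(2Wt) + (λ/2)sinc(2Wt − 1/2) + (λ/2)sinc(2Wt + 1/2)
has energy (1/(2W))·(λ²/2 + 4λ/π + 1), so its normalization has unit energy. -/
theorem pulse_energy (W lam : ℝ) (hW : 0 < W) :
    (∫ t : ℝ, (sinc (2*W*t) + (lam/2) * sinc (2*W*t - 1/2)
        + (lam/2) * sinc (2*W*t + 1/2))^2)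
      = (1/(2*W)) * (lam^2/2 + 4*lam/π + 1) ∧
    (∫ t : ℝ, (Real.sqrt (2*W / (lam^2/2 + 4*lam/π + 1)) *
        (sinc (2*W*t) + (lam/2) * sinc (2*W*t - 1/2)
          + (lam/2) * sinc (2*W*t + 1/2)))^2) = 1 := by
  have hπ : (0:ℝ) < π := Real.pi_pos
  have h8 : (8:ℝ) < π^2 := by nlinarith [Real.pi_gt_three]
  have hQ : (0:ℝ) < lam^2/2 + 4*lam/π + 1 := by
    have h3 : (lam + 4/π)^2 = lam^2 + 8*(lam/π) + 16/π^2 := by field_simp; ring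
    have h5 : 0 ≤ lam^2 + 8*(lam/π) + 16/π^2 := h3 ▸ sq_nonneg _
    have h4 : 16/π^2 < 2 := by rw [div_lt_iff₀ (by positivity)]; nlinarith
    have h6 : 4*lam/π = 4*(lam/π) := by ring
    nlinarith [h4, h5]
  set Q := lam^2/2 + 4*lam/π + 1 with hQdef
  have hE : (∫ t : ℝ, (sinc (2*W*t) + (lam/2) * sinc (2*W*t - 1/2)
        + (lam/2) * sinc (2*W*t + 1/2))^2) = (1/(2*W)) * Q := by
    have hcomp := MeasureTheory.Measure.integral_comp_mul_left
      (fun u : ℝ => (sinc u + (lam/2) * sinc (u - 1/2) + (lam/2) * sinc (u + 1/2))^2) (2*W)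
    rw [show (∫ t : ℝ, (sinc (2*W*t) + (lam/2) * sinc (2*W*t - 1/2)
        + (lam/2) * sinc (2*W*t + 1/2))^2)
      = ∫ t : ℝ, (fun u : ℝ => (sinc u + (lam/2) * sinc (u - 1/2)
        + (lam/2) * sinc (u + 1/2))^2) (2*W*t) from rfl]
    rw [hcomp, integral_pulse_sq lam, smul_eq_mul]
    rw [abs_of_pos (by positivity : (0:ℝ) < (2*W)⁻¹)]
    rw [one_div]
  refine ⟨hE, ?_⟩
  have hK : (0:ℝ) ≤ 2*W/Q := by positivity
  have hsq : ∀ t : ℝ, (Real.sqrt (2*W/Q) * (sinc (2*W*t) + (lam/2) * sinc (2*W*t - 1/2)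
      + (lam/2) * sinc (2*W*t + 1/2)))^2
      = (2*W/Q) * (sinc (2*W*t) + (lam/2) * sinc (2*W*t - 1/2)
      + (lam/2) * sinc (2*W*t + 1/2))^2 := by
    intro t
    rw [mul_pow, Real.sq_sqrt hK]
  simp_rw [hsq]
  rw [MeasureTheory.integral_const_mul, hE]
  field_simp
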